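/- Let 𝒞 be a C*-algebra, let 𝒜 and ℬ be finite-dimensional *-subalgebras of 𝒞, and let Ω be a nonempty locally compact Hausdorff space. Then d₀(𝒜, ℬ) = d₀(C₀(Ω, 𝒜), C₀(Ω, ℬ)), where C₀(Ω, 𝒜) and C₀(Ω, ℬ) are viewed as C*-subalgebras of C₀(Ω, 𝒞). -/
import Mathlib


open Metric
open scoped ZeroAtInfty

/-- `A ⊆_γ B`: every element of the closed unit ball of `A` is within distance `γ` of `B`. -/
def nearIncl {X : Type*} [NormedAddCommGroup X] (A B : Set X) (γ : ℝ) : Prop :=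
  ∀ x ∈ A ∩ closedBall (0 : X) 1, ∃ y ∈ B, ‖x - y‖ ≤ γ

/-- The Christensen distance `d₀`. -/
noncomputable def d0 {X : Type*} [NormedAddCommGroup X] (A B : Set X) : ℝ :=
  sInf {γ : ℝ | 0 < γ ∧ nearIncl A B γ ∧ nearIncl B A γ}

/-- `C₀(Ω, 𝒜)` viewed as a subset of `C₀(Ω, 𝒞)`: the continuous functions vanishing at infinity
with values in `𝒜`. -/
def c0ValIn {Ω C : Type*} [TopologicalSpace Ω] [NormedAddCommGroup C]
    (A : Set C) : Set C₀(Ω, C) :=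
  {f | ∀ t, f t ∈ A}

open Filter Topology Set

section Aux

variable {C : Type*} [NormedAddCommGroup C] [NormedSpace ℂ C]
variable {Ω : Type*} [TopologicalSpace Ω]

lemma pointwise_norm_le (f : C₀(Ω, C)) (t : Ω) : ‖f t‖ ≤ ‖f‖ := by
  rw [← ZeroAtInftyContinuousMap.norm_toBCF_eq_norm]
  exact f.toBCF.norm_coe_le_norm t

lemma c0_norm_le {f : C₀(Ω, C)} {M : ℝ} (hM : 0 ≤ M) (h : ∀ t, ‖f t‖ ≤ M) : ‖f‖ ≤ M := by
  rw [← ZeroAtInftyContinuousMap.norm_toBCF_eq_norm]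
  exact (BoundedContinuousFunction.norm_le hM).mpr h

/-- Trivial inclusion with constant 1 (via `y = 0`). -/
lemma nearIncl_one {A B : Set C} (hB : (0 : C) ∈ B) : nearIncl A B 1 := by
  intro x hx
  exact ⟨0, hB, by simpa using mem_closedBall_zero_iff.mp hx.2⟩

/-- Direction 1: near-inclusion at the `C₀` level implies near-inclusion at the fiber level. -/
lemma nearIncl_of_c0 [LocallyCompactSpace Ω] [T2Space Ω] [Nonempty Ω]
    (A : Submodule ℂ C) (Bs : Set C) {γ : ℝ}
    (h : nearIncl (c0ValIn (Ω := Ω) (A : Set C)) (c0ValIn Bs) γ) :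
    nearIncl (A : Set C) Bs γ := by
  intro x hx
  obtain ⟨t₀⟩ := ‹Nonempty Ω›
  obtain ⟨φ, hφ1, -, hφc, hφ01⟩ :=
    exists_continuous_one_zero_of_isCompact (isCompact_singleton (x := t₀))
      isClosed_empty (disjoint_empty _)
  have hxA : x ∈ A := hx.1
  have hxn : ‖x‖ ≤ 1 := mem_closedBall_zero_iff.mp hx.2
  have hcont : Continuous fun t : Ω => ((φ t : ℂ)) • x :=
    (Complex.continuous_ofReal.comp φ.continuous).smul continuous_const
  have hsupp : HasCompactSupport fun t : Ω => ((φ t : ℂ)) • x := by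
    have : (fun t : Ω => ((φ t : ℂ)) • x) = (fun r : ℝ => ((r : ℂ)) • x) ∘ φ := rfl
    rw [this]
    exact hφc.comp_left (by simp)
  set f : C₀(Ω, C) := ⟨⟨fun t => ((φ t : ℂ)) • x, hcont⟩, hsupp.is_zero_at_infty⟩ with hf
  have hfval : ∀ t, f t = ((φ t : ℂ)) • x := fun t => rfl
  have hfA : f ∈ c0ValIn (Ω := Ω) (A : Set C) := fun t => A.smul_mem _ hxA
  have hfball : f ∈ closedBall (0 : C₀(Ω, C)) 1 := by
    rw [mem_closedBall_zero_iff]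
    refine c0_norm_le one_pos.le fun t => ?_
    rw [hfval, norm_smul]
    have h1 : ‖((φ t : ℝ) : ℂ)‖ ≤ 1 := by
      rw [Complex.norm_real, Real.norm_eq_abs, abs_le]
      exact ⟨by linarith [(hφ01 t).1], (hφ01 t).2⟩
    calc ‖((φ t : ℝ) : ℂ)‖ * ‖x‖ ≤ 1 * 1 :=
          mul_le_mul h1 hxn (norm_nonneg _) one_pos.le
      _ = 1 := by ring
  obtain ⟨g, hgB, hfg⟩ := h f ⟨hfA, hfball⟩
  refine ⟨g t₀, hgB t₀, ?_⟩
  have hx0 : f t₀ = x := by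
    rw [hfval, hφ1 (mem_singleton t₀)]
    simp
  calc ‖x - g t₀‖ = ‖(f - g) t₀‖ := by rw [← hx0]; rfl
    _ ≤ ‖f - g‖ := pointwise_norm_le _ _
    _ ≤ γ := hfg

/-- Direction 2: near-inclusion at the fiber level implies near-inclusion at the `C₀` level,
up to an arbitrarily small loss. -/
lemma nearIncl_c0_of_nearIncl (A B : Submodule ℂ C) [FiniteDimensional ℂ A]
    {γ ε : ℝ} (hγ : 0 < γ) (hε : 0 < ε)
    (h : nearIncl (A : Set C) (B : Set C) γ) :
    nearIncl (c0ValIn (Ω := Ω) (A : Set C)) (c0ValIn (B : Set C)) (γ + ε) := by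
  classical
  -- the unit sphere of A, inside C
  set K : Set C := (A : Set C) ∩ sphere (0 : C) 1 with hK
  have hKc : IsCompact K := by
    have : K = Subtype.val '' (sphere (0 : ↥A) 1) := by
      ext x
      constructor
      · rintro ⟨hxA, hxs⟩
        exact ⟨⟨x, hxA⟩, by simpa [mem_sphere_zero_iff_norm] using
          mem_sphere_zero_iff_norm.mp hxs, rfl⟩
      · rintro ⟨a, ha, rfl⟩
        exact ⟨a.2, by simpa [mem_sphere_zero_iff_norm] using
          mem_sphere_zero_iff_norm.mp ha⟩
    rw [this]
    exact (isCompact_sphere (0 : ↥A) 1).image continuous_subtype_val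
  obtain ⟨T, hTK, hTfin, hTcov⟩ := hKc.finite_cover_balls hε
  -- the selection at points of T
  have hsel : ∀ s ∈ T, ∃ z ∈ (B : Set C), ‖s - z‖ ≤ γ := by
    intro s hs
    obtain ⟨hsA, hsn⟩ := hTK hs
    exact h s ⟨hsA, by
      rw [mem_closedBall_zero_iff, mem_sphere_zero_iff_norm.mp hsn]⟩
  choose! y hyB hyd using hsel
  set Tf : Finset C := hTfin.toFinset with hTf
  have hTfmem : ∀ {s : C}, s ∈ Tf ↔ s ∈ T := fun {s} => hTfin.mem_toFinset
  -- weights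
  set φ : C → C → ℝ := fun s x => max (ε * ‖x‖ - ‖x - ((‖x‖ : ℂ)) • s‖) 0 with hφ
  have hφ0 : ∀ s x, 0 ≤ φ s x := fun s x => le_max_right _ _
  have hφcont : ∀ s, Continuous fun x => φ s x := by
    intro s
    apply Continuous.max _ continuous_const
    exact ((continuous_const.mul continuous_norm).sub
      ((continuous_id.sub ((Complex.continuous_ofReal.comp continuous_norm).smul
        continuous_const)).norm))
  set W : C → ℝ := fun x => ∑ s ∈ Tf, φ s x with hW
  have hW0 : ∀ x, 0 ≤ W x := fun x => Finset.sum_nonneg fun s _ => hφ0 s x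
  set N : C → C := fun x => ∑ s ∈ Tf, ((φ s x : ℂ)) • (((‖x‖ : ℂ)) • y s) with hN
  set G : C → C := fun x => (((W x)⁻¹ : ℝ) : ℂ) • N x with hG
  -- positivity of W on A \ {0}
  have hWpos : ∀ x ∈ (A : Set C), x ≠ 0 → 0 < W x := by
    intro x hxA hx0
    have hxn : (0 : ℝ) < ‖x‖ := norm_pos_iff.mpr hx0
    set u : C := ((‖x‖⁻¹ : ℝ) : ℂ) • x with hu
    have huA : u ∈ (A : Set C) := A.smul_mem _ hxA
    have hun : ‖u‖ = 1 := by
      rw [hu, norm_smul, Complex.norm_real, Real.norm_eq_abs,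
        abs_of_pos (inv_pos.mpr hxn), inv_mul_cancel₀ hxn.ne']
    have huK : u ∈ K := ⟨huA, mem_sphere_zero_iff_norm.mpr hun⟩
    obtain ⟨s, hsT, hsu⟩ := mem_iUnion₂.mp (hTcov huK)
    have hdist : ‖u - s‖ < ε := by
      rw [← dist_eq_norm]; exact mem_ball.mp hsu
    have hxu : x = ((‖x‖ : ℝ) : ℂ) • u := by
      rw [hu, smul_smul]
      norm_cast
      rw [mul_inv_cancel₀ hxn.ne']
      simp
    have hxs : x - ((‖x‖ : ℂ)) • s = ((‖x‖ : ℂ)) • (u - s) := by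
      rw [smul_sub, ← hxu]
    have hval : ‖x - ((‖x‖ : ℂ)) • s‖ = ‖x‖ * ‖u - s‖ := by
      rw [hxs, norm_smul, Complex.norm_real, Real.norm_eq_abs, abs_of_pos hxn]
    have hφpos : 0 < φ s x := by
      rw [hφ]
      simp only [lt_max_iff]
      left
      rw [hval]
      nlinarith
    calc (0 : ℝ) < φ s x := hφpos
      _ ≤ W x := Finset.single_le_sum (fun s _ => hφ0 s x) (hTfmem.mpr hsT)
  -- G maps into B
  have hGB : ∀ x, G x ∈ B :=
    fun x => B.smul_mem _ (B.sum_mem fun s hs => B.smul_mem _ (B.smul_mem _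
      (hyB s (hTfmem.mp hs))))
  -- G 0 = 0
  have hφzero : ∀ s, φ s 0 = 0 := by
    intro s; rw [hφ]; simp
  have hG0 : G 0 = 0 := by
    rw [hG, hN]
    simp [hφzero]
  -- the key estimate
  have hkey : ∀ x ∈ (A : Set C), ‖x - G x‖ ≤ (γ + ε) * ‖x‖ := by
    intro x hxA
    rcases eq_or_ne x 0 with rfl | hx0
    · simp [hG0]
    · have hWx : 0 < W x := hWpos x hxA hx0
      have hxG : x - G x =
          (((W x)⁻¹ : ℝ) : ℂ) • (∑ s ∈ Tf, ((φ s x : ℂ)) • (x - ((‖x‖ : ℂ)) • y s)) := by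
        have hsum : ∑ s ∈ Tf, ((φ s x : ℂ)) • (x - ((‖x‖ : ℂ)) • y s)
            = ((W x : ℝ) : ℂ) • x - N x := by
          rw [hN, hW]
          push_cast
          rw [Finset.sum_smul, ← Finset.sum_sub_distrib]
          exact Finset.sum_congr rfl fun s _ => smul_sub _ _ _
        rw [hsum, smul_sub, smul_smul]
        have hc : (((W x)⁻¹ : ℝ) : ℂ) * ((W x : ℝ) : ℂ) = 1 := by
          norm_cast
          rw [inv_mul_cancel₀ hWx.ne']
        rw [hc, one_smul]
      rw [hxG, norm_smul, Complex.norm_real, Real.norm_eq_abs,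
        abs_of_pos (inv_pos.mpr hWx)]
      have hterm : ∀ s ∈ Tf, ‖((φ s x : ℂ)) • (x - ((‖x‖ : ℂ)) • y s)‖
          ≤ φ s x * ((γ + ε) * ‖x‖) := by
        intro s hs
        rw [norm_smul, Complex.norm_real, Real.norm_eq_abs, abs_of_nonneg (hφ0 s x)]
        rcases eq_or_lt_of_le (hφ0 s x) with hz | hpos
        · rw [← hz]; simp
        · apply mul_le_mul_of_nonneg_left _ (hφ0 s x)
          have hclose : ‖x - ((‖x‖ : ℂ)) • s‖ ≤ ε * ‖x‖ := by
            by_contra hcon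
            push_neg at hcon
            have : φ s x = 0 := by
              rw [hφ]
              simp only [max_eq_right_iff]
              linarith
            rw [this] at hpos
            exact lt_irrefl _ hpos
          have hsT : s ∈ T := hTfmem.mp hs
          have hys : ‖s - y s‖ ≤ γ := hyd s hsT
          calc ‖x - ((‖x‖ : ℂ)) • y s‖
              ≤ ‖x - ((‖x‖ : ℂ)) • s‖ + ‖((‖x‖ : ℂ)) • s - ((‖x‖ : ℂ)) • y s‖ := by
                have := norm_sub_le_norm_sub_add_norm_sub x (((‖x‖ : ℂ)) • s)
                  (((‖x‖ : ℂ)) • y s)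
                exact this
            _ ≤ ε * ‖x‖ + γ * ‖x‖ := by
                apply add_le_add hclose
                rw [← smul_sub, norm_smul, Complex.norm_real, Real.norm_eq_abs,
                  abs_of_nonneg (norm_nonneg x), mul_comm]
                exact mul_le_mul_of_nonneg_right hys (norm_nonneg x)
            _ = (γ + ε) * ‖x‖ := by ring
      calc (W x)⁻¹ * ‖∑ s ∈ Tf, ((φ s x : ℂ)) • (x - ((‖x‖ : ℂ)) • y s)‖
          ≤ (W x)⁻¹ * ∑ s ∈ Tf, φ s x * ((γ + ε) * ‖x‖) := by
            apply mul_le_mul_of_nonneg_left _ (inv_pos.mpr hWx).le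
            exact (norm_sum_le _ _).trans (Finset.sum_le_sum hterm)
        _ = (W x)⁻¹ * (W x * ((γ + ε) * ‖x‖)) := by
            rw [hW, ← Finset.sum_mul]
        _ = (γ + ε) * ‖x‖ := by
            rw [← mul_assoc, inv_mul_cancel₀ hWx.ne', one_mul]
  -- norm bound for G on A
  have hGle : ∀ x ∈ (A : Set C), ‖G x‖ ≤ (1 + γ + ε) * ‖x‖ := by
    intro x hxA
    have hGx : G x = x - (x - G x) := by abel
    calc ‖G x‖ = ‖x - (x - G x)‖ := by rw [← hGx]
      _ ≤ ‖x‖ + ‖x - G x‖ := norm_sub_le _ _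
      _ ≤ ‖x‖ + (γ + ε) * ‖x‖ := by linarith [hkey x hxA]
      _ = (1 + γ + ε) * ‖x‖ := by ring
  -- now the main statement
  intro f hf
  obtain ⟨hfA, hfb⟩ := hf
  have hfn : ‖f‖ ≤ 1 := mem_closedBall_zero_iff.mp hfb
  have hWc : Continuous fun t : Ω => W (f t) :=
    continuous_finset_sum _ fun s _ => (hφcont s).comp (map_continuous f)
  have hNc : Continuous fun t : Ω => N (f t) := by
    apply continuous_finset_sum
    intro s _
    exact (Complex.continuous_ofReal.comp ((hφcont s).comp (map_continuous f))).smul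
      ((Complex.continuous_ofReal.comp (continuous_norm.comp (map_continuous f))).smul
        continuous_const)
  have hgcont : Continuous fun t : Ω => G (f t) := by
    rw [continuous_iff_continuousAt]
    intro t₀
    rcases eq_or_ne (f t₀) 0 with hft | hft
    · have hg0 : G (f t₀) = 0 := by rw [hft, hG0]
      rw [ContinuousAt, hg0]
      apply squeeze_zero_norm (fun t => hGle (f t) (hfA t))
      have : Tendsto (fun t => (1 + γ + ε) * ‖f t‖) (𝓝 t₀) (𝓝 ((1 + γ + ε) * ‖f t₀‖)) :=
        (continuous_const.mul (continuous_norm.comp (map_continuous f))).tendsto t₀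
      simpa [hft] using this
    · have hWx : W (f t₀) ≠ 0 := (hWpos (f t₀) (hfA t₀) hft).ne'
      exact (Complex.continuous_ofReal.continuousAt.comp
        (hWc.continuousAt.inv₀ hWx)).smul hNc.continuousAt
  have hgzero : Tendsto (fun t : Ω => G (f t)) (cocompact Ω) (𝓝 0) := by
    apply squeeze_zero_norm (fun t => hGle (f t) (hfA t))
    have h1 : Tendsto (fun t : Ω => ‖f t‖) (cocompact Ω) (𝓝 0) :=
      tendsto_zero_iff_norm_tendsto_zero.mp f.zero_at_infty'
    simpa using h1.const_mul (1 + γ + ε)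
  set g : C₀(Ω, C) := ⟨⟨fun t => G (f t), hgcont⟩, hgzero⟩ with hg
  refine ⟨g, fun t => hGB (f t), ?_⟩
  apply c0_norm_le (by linarith)
  intro t
  have h1 : ‖f t - G (f t)‖ ≤ (γ + ε) * ‖f t‖ := hkey (f t) (hfA t)
  have h2 : ‖f t‖ ≤ 1 := (pointwise_norm_le f t).trans hfn
  have h3 : (f - g) t = f t - G (f t) := rfl
  rw [h3]
  nlinarith

end Aux

/-- For finite-dimensional `*`-subalgebras `𝒜, ℬ` of a C*-algebra `𝒞` and a nonempty locally
compact Hausdorff space `Ω`, `d₀(𝒜, ℬ) = d₀(C₀(Ω, 𝒜), C₀(Ω, ℬ))`. -/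
theorem d0_eq_d0_c0_of_finiteDimensional
    {C : Type*} [NonUnitalNormedRing C] [StarRing C] [CStarRing C] [NormedSpace ℂ C]
    [IsScalarTower ℂ C C] [SMulCommClass ℂ C C] [StarModule ℂ C] [CompleteSpace C]
    (Ω : Type*) [TopologicalSpace Ω] [LocallyCompactSpace Ω] [T2Space Ω] [Nonempty Ω]
    (A B : NonUnitalStarSubalgebra ℂ C)
    [FiniteDimensional ℂ A] [FiniteDimensional ℂ B] :
    d0 (A : Set C) (B : Set C) =
      d0 (c0ValIn (Ω := Ω) (A : Set C)) (c0ValIn (Ω := Ω) (B : Set C)) := by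
  set AM : Submodule ℂ C := A.toNonUnitalSubalgebra.toSubmodule with hAM
  set BM : Submodule ℂ C := B.toNonUnitalSubalgebra.toSubmodule with hBM
  have hAset : (A : Set C) = (AM : Set C) := rfl
  have hBset : (B : Set C) = (BM : Set C) := rfl
  have : FiniteDimensional ℂ AM := ‹FiniteDimensional ℂ A›
  have : FiniteDimensional ℂ BM := ‹FiniteDimensional ℂ B›
  rw [hAset, hBset]
  set S₁ : Set ℝ := {γ : ℝ | 0 < γ ∧ nearIncl (AM : Set C) (BM : Set C) γ ∧
    nearIncl (BM : Set C) (AM : Set C) γ} with hS₁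
  set S₂ : Set ℝ := {γ : ℝ | 0 < γ ∧
    nearIncl (c0ValIn (Ω := Ω) (AM : Set C)) (c0ValIn (Ω := Ω) (BM : Set C)) γ ∧
    nearIncl (c0ValIn (Ω := Ω) (BM : Set C)) (c0ValIn (Ω := Ω) (AM : Set C)) γ} with hS₂
  have hbdd₁ : BddBelow S₁ := ⟨0, fun γ hγ => hγ.1.le⟩
  have hbdd₂ : BddBelow S₂ := ⟨0, fun γ hγ => hγ.1.le⟩
  have hne₁ : S₁.Nonempty :=
    ⟨1, one_pos, nearIncl_one BM.zero_mem, nearIncl_one AM.zero_mem⟩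
  have hne₂ : S₂.Nonempty := by
    refine ⟨1, one_pos, nearIncl_one (fun t => BM.zero_mem), nearIncl_one (fun t => AM.zero_mem)⟩
  have hsub : S₂ ⊆ S₁ := by
    rintro γ ⟨hγ, h₁, h₂⟩
    exact ⟨hγ, nearIncl_of_c0 AM (BM : Set C) h₁, nearIncl_of_c0 BM (AM : Set C) h₂⟩
  show sInf S₁ = sInf S₂
  apply le_antisymm
  · exact csInf_le_csInf hbdd₁ hne₂ hsub
  · apply le_csInf hne₁
    rintro γ ⟨hγ, h₁, h₂⟩
    apply le_of_forall_pos_le_add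
    intro ε hε
    apply csInf_le hbdd₂
    exact ⟨by linarith, nearIncl_c0_of_nearIncl AM BM hγ hε h₁,
      nearIncl_c0_of_nearIncl BM AM hγ hε h₂⟩
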